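/- Chain rule for stream derivative (semantic form): let K be a field of characteristic 0 and p a polynomial in the variables x, y₁, ..., yₙ with coefficients in K. Then there exist polynomials q₀, q₁, ..., qₙ in the variables x, y₀₁,...,y₀ₙ, y₁,...,yₙ with coefficients in K such that for every tuple of streams σ = (σ₁,...,σₙ) over K, writing r₀ = (σ₁(0),...,σₙ(0)), one has (p(X, σ))' = q₀(X, r₀, σ) + Σᵢ₌₁ⁿ qᵢ(X, r₀, σ) · σᵢ'. -/

import Mathlib

/-- Stream derivative: remove the first coefficient. -/
noncomputable def sderiv {K : Type*} [Field K] (σ : PowerSeries K) : PowerSeries K :=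
  PowerSeries.mk fun k => PowerSeries.coeff (k + 1) σ

/-- Variable set `x, y₀₁,...,y₀ₙ, y₁,...,yₙ`. -/
abbrev VarV (n : ℕ) := Unit ⊕ (Fin n ⊕ Fin n)

/-- Evaluation of a polynomial in `x, y₁, ..., yₙ` (variable `0` playing the role of `x`)
at `x := X` and `yᵢ := σᵢ`. -/
noncomputable def polyEval {K : Type*} [Field K] {n : ℕ}
    (p : MvPolynomial (Fin (n + 1)) K) (σ : Fin n → PowerSeries K) : PowerSeries K :=
  MvPolynomial.aeval (Fin.cons PowerSeries.X σ) p

/-- Evaluation of a polynomial in `x, y₀, y` at `x := X`, `y₀ᵢ := C r₀ᵢ`, `yᵢ := σᵢ`. -/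
noncomputable def evalV {K : Type*} [Field K] {n : ℕ}
    (q : MvPolynomial (VarV n) K) (r0 : Fin n → K) (σ : Fin n → PowerSeries K) :
    PowerSeries K :=
  MvPolynomial.aeval
    (Sum.elim (fun _ => PowerSeries.X)
      (Sum.elim (fun i => PowerSeries.C (r0 i)) σ)) q

section Aux

variable {K : Type*} [Field K] {n : ℕ}

lemma sderiv_decomp (a : PowerSeries K) :
    PowerSeries.X * sderiv a + PowerSeries.C (PowerSeries.constantCoeff a) = a := by
  ext k
  cases k with
  | zero => simp [sderiv, PowerSeries.coeff_zero_eq_constantCoeff]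
  | succ k => simp [sderiv, PowerSeries.coeff_succ_X_mul]

lemma X_mul_sderiv (a : PowerSeries K) :
    PowerSeries.X * sderiv a = a - PowerSeries.C (PowerSeries.constantCoeff a) := by
  have := sderiv_decomp a; linear_combination this

lemma sderiv_mul (a b : PowerSeries K) :
    sderiv (a * b) = sderiv a * b +
      PowerSeries.C (PowerSeries.constantCoeff a) * sderiv b := by
  apply mul_left_cancel₀ (PowerSeries.X_ne_zero (R := K))
  rw [X_mul_sderiv]
  have h1 := X_mul_sderiv a
  have h2 := X_mul_sderiv b
  rw [map_mul, map_mul]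
  linear_combination (-b) * h1 - PowerSeries.C (PowerSeries.constantCoeff a) * h2

lemma sderiv_C (c : K) : sderiv (PowerSeries.C c) = 0 := by
  ext k; simp [sderiv]

lemma sderiv_add (a b : PowerSeries K) :
    sderiv (a + b) = sderiv a + sderiv b := by
  ext k; simp [sderiv]

lemma sderiv_X : sderiv (PowerSeries.X : PowerSeries K) = 1 := by
  ext k
  simp only [sderiv, PowerSeries.coeff_mk, PowerSeries.coeff_X, PowerSeries.coeff_one]
  by_cases h : k = 0 <;> simp [h]

/-- Constant-coefficient algebra homomorphism. -/
noncomputable def ccAlg : PowerSeries K →ₐ[K] K :=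
  { PowerSeries.constantCoeff with
    commutes' := fun r => by simp [PowerSeries.algebraMap_apply] }

/-- `C` as an algebra homomorphism. -/
noncomputable def cAlg : K →ₐ[K] PowerSeries K := Algebra.ofId K (PowerSeries K)

lemma cAlg_apply (c : K) : (cAlg (K := K)) c = PowerSeries.C c := by
  simp [cAlg, Algebra.ofId_apply, PowerSeries.algebraMap_apply]

/-- The polynomial in `y₀` giving the constant term of `p(X, σ)`. -/
noncomputable def ct (p : MvPolynomial (Fin (n + 1)) K) : MvPolynomial (VarV n) K :=
  MvPolynomial.aeval
    (Fin.cons 0 (fun i => MvPolynomial.X (Sum.inr (Sum.inl i)))) p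

lemma ccAlg_apply (a : PowerSeries K) :
    (ccAlg (K := K)) a = PowerSeries.constantCoeff a := rfl

lemma evalV_ct (p : MvPolynomial (Fin (n + 1)) K) (σ : Fin n → PowerSeries K) :
    evalV (ct p) (fun i => PowerSeries.coeff 0 (σ i)) σ =
      PowerSeries.C (PowerSeries.constantCoeff (polyEval p σ)) := by
  set G : Fin (n + 1) → K :=
    Fin.cons 0 (fun i => PowerSeries.coeff 0 (σ i)) with hG
  have hL : evalV (ct p) (fun i => PowerSeries.coeff 0 (σ i)) σ =
      MvPolynomial.aeval (fun i => PowerSeries.C (G i)) p := by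
    unfold evalV ct
    rw [MvPolynomial.comp_aeval_apply]
    refine congrArg (fun v : Fin (n + 1) → PowerSeries K => MvPolynomial.aeval v p)
      (funext fun i => ?_)
    induction i using Fin.cases with
    | zero => simp [hG]
    | succ j => simp [hG]
  have hR : PowerSeries.constantCoeff (polyEval p σ) = MvPolynomial.aeval G p := by
    have e1 : PowerSeries.constantCoeff (polyEval p σ) =
        ccAlg (MvPolynomial.aeval (Fin.cons PowerSeries.X σ) p) := rfl
    rw [e1, MvPolynomial.comp_aeval_apply]
    refine congrArg (fun v : Fin (n + 1) → K => MvPolynomial.aeval v p)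
      (funext fun i => ?_)
    induction i using Fin.cases with
    | zero => simp [hG, ccAlg_apply]
    | succ j => simp [hG, ccAlg_apply, PowerSeries.coeff_zero_eq_constantCoeff]
  have hC : PowerSeries.C (MvPolynomial.aeval G p) =
      MvPolynomial.aeval (fun i => PowerSeries.C (G i)) p := by
    have e1 : PowerSeries.C (MvPolynomial.aeval G p) =
        cAlg (MvPolynomial.aeval G p) := (cAlg_apply _).symm
    rw [e1, MvPolynomial.comp_aeval_apply]
    refine congrArg (fun v : Fin (n + 1) → PowerSeries K => MvPolynomial.aeval v p)
      (funext fun i => (cAlg_apply _))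
  rw [hL, hR, hC]

lemma evalV_xvar (r0 : Fin n → K) (σ : Fin n → PowerSeries K) :
    evalV (MvPolynomial.X (Sum.inl ())) r0 σ = PowerSeries.X := by
  simp [evalV]

lemma evalV_yvar (i : Fin n) (r0 : Fin n → K) (σ : Fin n → PowerSeries K) :
    evalV (MvPolynomial.X (Sum.inr (Sum.inr i))) r0 σ = σ i := by
  simp [evalV]

lemma evalV_mul (a b : MvPolynomial (VarV n) K) (r0 : Fin n → K)
    (σ : Fin n → PowerSeries K) :
    evalV (a * b) r0 σ = evalV a r0 σ * evalV b r0 σ := map_mul _ _ _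

lemma evalV_add (a b : MvPolynomial (VarV n) K) (r0 : Fin n → K)
    (σ : Fin n → PowerSeries K) :
    evalV (a + b) r0 σ = evalV a r0 σ + evalV b r0 σ := map_add _ _ _

lemma evalV_zero (r0 : Fin n → K) (σ : Fin n → PowerSeries K) :
    evalV (0 : MvPolynomial (VarV n) K) r0 σ = 0 := map_zero _

end Aux

/-- Chain rule for the stream derivative, semantic form. -/
theorem stream_chain_rule {K : Type*} [Field K] [CharZero K] {n : ℕ}
    (p : MvPolynomial (Fin (n + 1)) K) :
    ∃ (q0 : MvPolynomial (VarV n) K) (q : Fin n → MvPolynomial (VarV n) K),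
      ∀ σ : Fin n → PowerSeries K,
        sderiv (polyEval p σ) =
          evalV q0 (fun i => PowerSeries.coeff 0 (σ i)) σ +
          ∑ i, evalV (q i) (fun j => PowerSeries.coeff 0 (σ j)) σ * sderiv (σ i) := by
  induction p using MvPolynomial.induction_on with
  | C a =>
    refine ⟨0, 0, fun σ => ?_⟩
    have : polyEval (MvPolynomial.C a) σ = PowerSeries.C a := by
      simp [polyEval, PowerSeries.algebraMap_apply]
    simp [this, sderiv_C, evalV_zero]
  | add p1 p2 ih1 ih2 =>
    obtain ⟨q0, q, h⟩ := ih1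
    obtain ⟨q0', q', h'⟩ := ih2
    refine ⟨q0 + q0', q + q', fun σ => ?_⟩
    have hp : polyEval (p1 + p2) σ = polyEval p1 σ + polyEval p2 σ := map_add _ _ _
    rw [hp, sderiv_add, h σ, h' σ]
    simp only [Pi.add_apply, evalV_add, add_mul, Finset.sum_add_distrib]
    ring
  | mul_X p1 j ih =>
    obtain ⟨q0, q, h⟩ := ih
    have hmul : ∀ σ : Fin n → PowerSeries K,
        polyEval (p1 * MvPolynomial.X j) σ =
          polyEval p1 σ * (Fin.cons (α := fun _ => PowerSeries K) PowerSeries.X σ j) := by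
      intro σ; simp [polyEval]
    induction j using Fin.cases with
    | zero =>
      refine ⟨q0 * MvPolynomial.X (Sum.inl ()) + ct p1,
        fun k => q k * MvPolynomial.X (Sum.inl ()), fun σ => ?_⟩
      rw [hmul σ, Fin.cons_zero, sderiv_mul, h σ, sderiv_X]
      simp only [evalV_add, evalV_mul, evalV_xvar, evalV_ct]
      have hs : (∑ k, evalV (q k) (fun j => PowerSeries.coeff 0 (σ j)) σ * sderiv (σ k)) * PowerSeries.X =
          ∑ k, evalV (q k) (fun j => PowerSeries.coeff 0 (σ j)) σ * PowerSeries.X * sderiv (σ k) := by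
        rw [Finset.sum_mul]
        exact Finset.sum_congr rfl fun k _ => by ring
      rw [add_mul, hs]
      ring
    | succ i =>
      refine ⟨q0 * MvPolynomial.X (Sum.inr (Sum.inr i)),
        fun k => q k * MvPolynomial.X (Sum.inr (Sum.inr i)) +
          if k = i then ct p1 else 0, fun σ => ?_⟩
      rw [hmul σ, Fin.cons_succ, sderiv_mul, h σ]
      have hterm : ∀ k, evalV (q k * MvPolynomial.X (Sum.inr (Sum.inr i)) +
          if k = i then ct p1 else 0) (fun j => PowerSeries.coeff 0 (σ j)) σ =
          evalV (q k) (fun j => PowerSeries.coeff 0 (σ j)) σ * σ i +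
            if k = i then PowerSeries.C (PowerSeries.constantCoeff (polyEval p1 σ))
            else 0 := by
        intro k
        split_ifs with hk
        · rw [evalV_add, evalV_mul, evalV_yvar, evalV_ct]
        · simp [evalV_mul, evalV_yvar]
      simp only [evalV_mul, evalV_yvar, hterm, add_mul, Finset.sum_add_distrib, ite_mul,
        zero_mul]
      rw [Finset.sum_ite_eq' Finset.univ i
        (fun k => PowerSeries.C (PowerSeries.constantCoeff (polyEval p1 σ)) * sderiv (σ k))]
      simp only [Finset.mem_univ, if_true]
      have hs : (∑ k, evalV (q k) (fun j => PowerSeries.coeff 0 (σ j)) σ * sderiv (σ k)) * σ i =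
          ∑ k, evalV (q k) (fun j => PowerSeries.coeff 0 (σ j)) σ * σ i * sderiv (σ k) := by
        rw [Finset.sum_mul]
        exact Finset.sum_congr rfl fun k _ => by ring
      rw [hs]
      ring
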